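/- Let Y and T be groups. Equip the group T^Y of all functions Y → T under pointwise multiplication with the action of Y by group automorphisms given by (y • φ)(z) = φ(z·y), and form the semidirect product Y ⋉ T^Y with projection π : Y ⋉ T^Y → Y and canonical section y ↦ (y, 1). Then for every group X, every surjective group homomorphism f : X → Y with a group-homomorphic section s (f ∘ s = id_Y), and every group homomorphism h : ker f → T, there exists a unique group homomorphism χ : X → Y ⋉ T^Y such that π ∘ χ = f, χ(s(y)) = (y, 1) for all y ∈ Y, and for every k ∈ ker f the second component of χ(k), evaluated at the identity of Y, equals h(k). Explicitly, χ(x) = (f(x), y ↦ h(s(y)·x·s(f(x))⁻¹·s(y)⁻¹)). -/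

import Mathlib

/-- The action of a group `Y` on the group `T^Y = (Y → T)` of functions with pointwise
multiplication, given by `(y • φ) z = φ (z * y)`. -/
def functionAction (Y T : Type*) [Group Y] [Group T] : Y →* MulAut (Y → T) where
  toFun y :=
    { toFun := fun φ z => φ (z * y)
      invFun := fun φ z => φ (z * y⁻¹)
      left_inv := by intro φ; funext z; simp [mul_assoc]
      right_inv := by intro φ; funext z; simp [mul_assoc]
      map_mul' := by intros; rfl }
  map_one' := by ext φ z; simp
  map_mul' := by intro a b; ext φ z; simp [mul_assoc]

lemma aux_mem {Y : Type*} [Group Y] {X : Type*} [Group X]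
    (f : X →* Y) (s : Y →* X) (hs : ∀ y, f (s y) = y) (y : Y) (x : X) :
    s y * x * (s (f x))⁻¹ * (s y)⁻¹ ∈ f.ker := by
  simp [MonoidHom.mem_ker, hs]

/-- The explicit homomorphism. -/
def chi {Y T : Type*} [Group Y] [Group T] {X : Type*} [Group X]
    (f : X →* Y) (s : Y →* X) (hs : ∀ y, f (s y) = y) (h : f.ker →* T) :
    X →* (Y → T) ⋊[functionAction Y T] Y where
  toFun x := ⟨fun y => h ⟨s y * x * (s (f x))⁻¹ * (s y)⁻¹, aux_mem f s hs y x⟩, f x⟩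
  map_one' := by
    apply SemidirectProduct.ext
    · funext y
      show h ⟨s y * 1 * (s (f 1))⁻¹ * (s y)⁻¹, aux_mem f s hs y 1⟩ = 1
      rw [← h.map_one]
      congr 1
      ext
      simp
    · simp
  map_mul' x₁ x₂ := by
    apply SemidirectProduct.ext
    · funext y
      show h ⟨s y * (x₁ * x₂) * (s (f (x₁ * x₂)))⁻¹ * (s y)⁻¹, aux_mem f s hs y (x₁ * x₂)⟩ =
        h ⟨s y * x₁ * (s (f x₁))⁻¹ * (s y)⁻¹, aux_mem f s hs y x₁⟩ *
        h ⟨s (y * f x₁) * x₂ * (s (f x₂))⁻¹ * (s (y * f x₁))⁻¹, aux_mem f s hs (y * f x₁) x₂⟩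
      rw [← h.map_mul]
      congr 1
      ext
      show s y * (x₁ * x₂) * (s (f (x₁ * x₂)))⁻¹ * (s y)⁻¹ =
        (s y * x₁ * (s (f x₁))⁻¹ * (s y)⁻¹) *
        (s (y * f x₁) * x₂ * (s (f x₂))⁻¹ * (s (y * f x₁))⁻¹)
      simp only [map_mul, mul_inv_rev]
      group
    · exact map_mul f x₁ x₂

/-- Statement 17: in the category of groups, the change of base along `1 → Y` with
respect to the fibration of points has a right adjoint: for every split extension
`(f, s)` over `Y` and homomorphism `h : ker f → T` there is a unique homomorphism
`χ : X → Y ⋉ T^Y` over `Y`, compatible with the sections, whose kernel-component at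
`1` is `h`; explicitly `χ x = (f x, fun y => h (s y * x * (s (f x))⁻¹ * (s y)⁻¹))`. -/
theorem statement17 (Y T : Type*) [Group Y] [Group T]
    (X : Type*) [Group X] (f : X →* Y) (hf : Function.Surjective f)
    (s : Y →* X) (hs : ∀ y, f (s y) = y) (h : f.ker →* T) :
    (∃! χ : X →* (Y → T) ⋊[functionAction Y T] Y,
      SemidirectProduct.rightHom.comp χ = f ∧
      (∀ y : Y, χ (s y) = SemidirectProduct.inr y) ∧
      (∀ k : f.ker, (χ (k : X)).left 1 = h k)) ∧
    (∀ χ : X →* (Y → T) ⋊[functionAction Y T] Y,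
      (SemidirectProduct.rightHom.comp χ = f ∧
        (∀ y : Y, χ (s y) = SemidirectProduct.inr y) ∧
        (∀ k : f.ker, (χ (k : X)).left 1 = h k)) →
      ∀ x : X,
        χ x = ⟨fun y => h ⟨s y * x * (s (f x))⁻¹ * (s y)⁻¹, by
          simp [MonoidHom.mem_ker, hs]⟩, f x⟩) := by
  have uniq : ∀ χ : X →* (Y → T) ⋊[functionAction Y T] Y,
      (SemidirectProduct.rightHom.comp χ = f ∧
        (∀ y : Y, χ (s y) = SemidirectProduct.inr y) ∧
        (∀ k : f.ker, (χ (k : X)).left 1 = h k)) →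
      ∀ x : X,
        χ x = ⟨fun y => h ⟨s y * x * (s (f x))⁻¹ * (s y)⁻¹, by
          simp [MonoidHom.mem_ker, hs]⟩, f x⟩ := by
    rintro χ ⟨h1, h2, h3⟩ x
    have hr : ∀ z : X, (χ z).right = f z := fun z => DFunLike.congr_fun h1 z
    have hk : x * (s (f x))⁻¹ ∈ f.ker := by simp [MonoidHom.mem_ker, hs]
    set k : X := x * (s (f x))⁻¹ with hk_def
    have hkr : (χ k).right = 1 := by rw [hr]; exact hk
    have hcmem : ∀ y : Y, s y * k * (s y)⁻¹ ∈ f.ker := by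
      intro y; simpa [MonoidHom.mem_ker, hs] using hk
    have hleft : ∀ y : Y, (χ k).left y = h ⟨s y * k * (s y)⁻¹, hcmem y⟩ := by
      intro y
      have := h3 ⟨s y * k * (s y)⁻¹, hcmem y⟩
      have hχ : χ (s y * k * (s y)⁻¹) = χ (s y) * χ k * (χ (s y))⁻¹ := by
        simp [map_mul, map_inv]
      rw [hχ, h2] at this
      rw [← this]
      simp only [SemidirectProduct.mul_left, SemidirectProduct.inv_left,
        SemidirectProduct.mul_right, SemidirectProduct.left_inr,
        SemidirectProduct.right_inr, hkr, one_mul, mul_one, map_one, inv_one, map_inv]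
      show _ = (χ k).left (1 * y)
      rw [one_mul]
    have hsplit : χ x = χ k * SemidirectProduct.inr (f x) := by
      rw [← h2 (f x), ← map_mul]
      congr 1
      simp [hk_def]
    rw [hsplit]
    apply SemidirectProduct.ext
    · funext y
      rw [SemidirectProduct.mul_left, SemidirectProduct.left_inr, map_one]
      simp only [Pi.mul_apply, Pi.one_apply, mul_one]
      rw [hleft y]
      congr 1
      ext
      simp only [hk_def]
      group
    · rw [SemidirectProduct.mul_right, hkr, one_mul, SemidirectProduct.right_inr]
  refine ⟨⟨chi f s hs h, ⟨?_, ?_, ?_⟩, ?_⟩, uniq⟩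
  · ext x; rfl
  · intro y
    apply SemidirectProduct.ext
    · funext z
      show h ⟨s z * s y * (s (f (s y)))⁻¹ * (s z)⁻¹, aux_mem f s hs z (s y)⟩ = 1
      rw [← h.map_one]
      congr 1
      ext
      show s z * s y * (s (f (s y)))⁻¹ * (s z)⁻¹ = 1
      rw [hs]
      group
    · show f (s y) = y
      exact hs y
  · intro k
    show h ⟨s 1 * (k : X) * (s (f (k : X)))⁻¹ * (s 1)⁻¹, aux_mem f s hs 1 (k : X)⟩ = h k
    congr 1
    ext
    show s 1 * (k : X) * (s (f (k : X)))⁻¹ * (s 1)⁻¹ = (k : X)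
    have hk1 : f (k : X) = 1 := k.2
    simp [hk1]
  · intro χ hχ
    apply MonoidHom.ext
    intro x
    rw [uniq χ hχ x]
    rfl
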